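/- Let $G, F \in \mathbb{C}^{s\times s}$ with $F$ invertible, and suppose $G^*G + F^*F = N^*N$ for some invertible $N \in \mathbb{C}^{s\times s}$ (so $N^*N \succeq F^*F \succ 0$). Then $(F^*F)^{-1} - (N^*N)^{-1}$ is positive semidefinite, and moreover $(F^*F)^{-1} - (N^*N)^{-1} = (N^*N)^{-1} G^* \left(I - G(N^*N)^{-1}G^*\right)^{-1} G (N^*N)^{-1}$ whenever $I - G(N^*N)^{-1}G^*$ is invertible. -/

import Mathlib

open Matrix
open scoped ComplexOrder

private lemma wb_add {R : Type*} [Ring R] (u v b bi t ti : R)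
    (hb : b * bi = 1) (ht : t * ti = 1) (hT : t = 1 + v * bi * u) :
    (u * v + b) * (bi - bi * u * ti * v * bi) = 1 := by
  have h1 : u * (v * (bi * (u * (ti * (v * bi))))) + u * (ti * (v * bi))
      = u * (t * (ti * (v * bi))) := by
    rw [hT]; noncomm_ring
  have h2 : u * (t * (ti * (v * bi))) = u * (v * bi) := by
    rw [← mul_assoc t ti, ht, one_mul]
  calc (u * v + b) * (bi - bi * u * ti * v * bi)
      = u * (v * bi) + b * bi
        - (u * (v * (bi * (u * (ti * (v * bi))))) + u * (ti * (v * bi)))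
        + (u * (ti * (v * bi)) - b * bi * (u * (ti * (v * bi)))) := by noncomm_ring
    _ = 1 := by rw [h1, h2, hb]; noncomm_ring

private lemma wb_sub {R : Type*} [Ring R] (u v a ai s si : R)
    (ha : a * ai = 1) (hs : s * si = 1) (hS : s = 1 - v * ai * u) :
    (a - u * v) * (ai + ai * u * si * v * ai) = 1 := by
  have h1 : u * (si * (v * ai)) - u * (v * (ai * (u * (si * (v * ai)))))
      = u * (s * (si * (v * ai))) := by
    rw [hS]; noncomm_ring
  have h2 : u * (s * (si * (v * ai))) = u * (v * ai) := by
    rw [← mul_assoc s si, hs, one_mul]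
  calc (a - u * v) * (ai + ai * u * si * v * ai)
      = a * ai + a * ai * (u * (si * (v * ai))) - u * (v * ai)
        - u * (v * (ai * (u * (si * (v * ai))))) := by noncomm_ring
    _ = 1 + (u * (si * (v * ai)) - u * (v * (ai * (u * (si * (v * ai)))))) - u * (v * ai) := by
        rw [ha]; noncomm_ring
    _ = 1 := by rw [h1, h2]; noncomm_ring

theorem peak_plateau_identity {s : ℕ}
    (G F N : Matrix (Fin s) (Fin s) ℂ)
    (hF : IsUnit F) (hN : IsUnit N)
    (h : Gᴴ * G + Fᴴ * F = Nᴴ * N) :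
    ((Fᴴ * F)⁻¹ - (Nᴴ * N)⁻¹).PosSemidef ∧
      (IsUnit (1 - G * (Nᴴ * N)⁻¹ * Gᴴ) →
        (Fᴴ * F)⁻¹ - (Nᴴ * N)⁻¹ =
          (Nᴴ * N)⁻¹ * Gᴴ * (1 - G * (Nᴴ * N)⁻¹ * Gᴴ)⁻¹ * G * (Nᴴ * N)⁻¹) := by
  -- positive definiteness of Fᴴ F
  have hBpd : (Fᴴ * F).PosDef := by
    refine .of_dotProduct_mulVec_pos (isHermitian_conjTranspose_mul_self _) fun x hx => ?_
    rw [← mulVec_mulVec, dotProduct_mulVec, vecMul_conjTranspose, star_star]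
    refine dotProduct_star_self_pos_iff.mpr fun h0 => hx ?_
    have hinj := (mulVec_injective_iff_isUnit).mpr hF
    have : F *ᵥ x = F *ᵥ 0 := by simpa using h0
    simpa using hinj this
  have hAunit : IsUnit (Nᴴ * N) := ((isUnit_conjTranspose _).mpr hN).mul hN
  have hBunit : IsUnit (Fᴴ * F) := hBpd.isUnit
  have hBmul : (Fᴴ * F) * (Fᴴ * F)⁻¹ = 1 :=
    mul_nonsing_inv _ ((isUnit_iff_isUnit_det _).mp hBunit)
  have hAmul : (Nᴴ * N) * (Nᴴ * N)⁻¹ = 1 :=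
    mul_nonsing_inv _ ((isUnit_iff_isUnit_det _).mp hAunit)
  -- part 1
  set T : Matrix (Fin s) (Fin s) ℂ := 1 + G * (Fᴴ * F)⁻¹ * Gᴴ with hTdef
  have hTpd : T.PosDef :=
    Matrix.PosDef.add_posSemidef (R := ℂ) Matrix.PosDef.one
      (hBpd.inv.posSemidef.mul_mul_conjTranspose_same G)
  have hTmul : T * T⁻¹ = 1 :=
    mul_nonsing_inv _ ((isUnit_iff_isUnit_det _).mp hTpd.isUnit)
  have key1 : (Nᴴ * N) *
      ((Fᴴ * F)⁻¹ - (Fᴴ * F)⁻¹ * Gᴴ * T⁻¹ * G * (Fᴴ * F)⁻¹) = 1 := by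
    rw [← h]
    exact wb_add Gᴴ G (Fᴴ * F) (Fᴴ * F)⁻¹ T T⁻¹ hBmul hTmul hTdef
  have hAinv : (Nᴴ * N)⁻¹ =
      (Fᴴ * F)⁻¹ - (Fᴴ * F)⁻¹ * Gᴴ * T⁻¹ * G * (Fᴴ * F)⁻¹ :=
    inv_eq_right_inv key1
  have hdiff : (Fᴴ * F)⁻¹ - (Nᴴ * N)⁻¹ =
      (Fᴴ * F)⁻¹ * Gᴴ * T⁻¹ * G * (Fᴴ * F)⁻¹ := by
    rw [hAinv, sub_sub_cancel]
  constructor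
  · rw [hdiff]
    have hBH : ((Fᴴ * F)⁻¹)ᴴ = (Fᴴ * F)⁻¹ := hBpd.isHermitian.inv
    have := hTpd.inv.posSemidef.conjTranspose_mul_mul_same (G * (Fᴴ * F)⁻¹)
    have heq : (G * (Fᴴ * F)⁻¹)ᴴ * T⁻¹ * (G * (Fᴴ * F)⁻¹)
        = (Fᴴ * F)⁻¹ * Gᴴ * T⁻¹ * G * (Fᴴ * F)⁻¹ := by
      rw [conjTranspose_mul, hBH]
      simp [Matrix.mul_assoc]
    rwa [heq] at this
  -- part 2
  · intro hS
    have hSmul : (1 - G * (Nᴴ * N)⁻¹ * Gᴴ) * (1 - G * (Nᴴ * N)⁻¹ * Gᴴ)⁻¹ = 1 :=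
      mul_nonsing_inv _ ((isUnit_iff_isUnit_det _).mp hS)
    have hFF : Fᴴ * F = (Nᴴ * N) - Gᴴ * G := by rw [← h]; abel
    have key2 : (Fᴴ * F) *
        ((Nᴴ * N)⁻¹ + (Nᴴ * N)⁻¹ * Gᴴ * (1 - G * (Nᴴ * N)⁻¹ * Gᴴ)⁻¹ * G * (Nᴴ * N)⁻¹) = 1 := by
      rw [hFF]
      exact wb_sub Gᴴ G (Nᴴ * N) (Nᴴ * N)⁻¹ _ _ hAmul hSmul rfl
    have hBinv : (Fᴴ * F)⁻¹ =
        (Nᴴ * N)⁻¹ + (Nᴴ * N)⁻¹ * Gᴴ * (1 - G * (Nᴴ * N)⁻¹ * Gᴴ)⁻¹ * G * (Nᴴ * N)⁻¹ :=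
      inv_eq_right_inv key2
    rw [hBinv]
    exact add_sub_cancel_left _ _
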